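/- Let R be a 3×3 completely-S matrix with unit diagonal and let θ ∈ ℝ³ have each component θ_i ∈ {−1, 0, 1}. If LCP(θ,R) has a solution in Category IV, then LCP(θ,R) also has a solution in Category I or a solution in Category II (or both). -/

import Mathlib

open Matrix

/-- `(u, v)` is a solution of the linear complementarity problem LCP(θ, R). -/
def IsLCPSolution {d : ℕ} (θ : Fin d → ℝ) (R : Matrix (Fin d) (Fin d) ℝ)
    (u v : Fin d → ℝ) : Prop :=
  (∀ i, 0 ≤ u i) ∧ (∀ i, 0 ≤ v i) ∧ v = θ + R.mulVec u ∧ u ⬝ᵥ v = 0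

/-- `R` is a completely-S matrix: every principal submatrix of `R` is an S-matrix. -/
def CompletelyS {d : ℕ} (R : Matrix (Fin d) (Fin d) ℝ) : Prop :=
  ∀ s : Finset (Fin d), s.Nonempty →
    ∃ w : Fin d → ℝ, (∀ i, 0 ≤ w i) ∧ (∀ i, i ∉ s → w i = 0) ∧
      ∀ i ∈ s, 0 < R.mulVec w i

/-- Category I: exactly two components of `v` are positive, and the complementary
component of `u` is positive. -/
def CategoryI (θ : Fin 3 → ℝ) (R : Matrix (Fin 3) (Fin 3) ℝ) : Prop :=
  ∃ u v : Fin 3 → ℝ, IsLCPSolution θ R u v ∧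
    ∃ i : Fin 3, 0 < u i ∧ v i = 0 ∧ ∀ j, j ≠ i → 0 < v j

/-- Category II: exactly one component of `v` is positive (say component `k`, with
`v` vanishing at the two other coordinates `j₁, j₂`), the 2×2 principal submatrix
`R̂` of `R` indexed by `j₁, j₂` has positive determinant, and the two complementary
components of `u` are not both zero. -/
def CategoryII (θ : Fin 3 → ℝ) (R : Matrix (Fin 3) (Fin 3) ℝ) : Prop :=
  ∃ u v : Fin 3 → ℝ, IsLCPSolution θ R u v ∧
    ∃ k j₁ j₂ : Fin 3, j₁ ≠ j₂ ∧ j₁ ≠ k ∧ j₂ ≠ k ∧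
      0 < v k ∧ v j₁ = 0 ∧ v j₂ = 0 ∧
      0 < R j₁ j₁ * R j₂ j₂ - R j₁ j₂ * R j₂ j₁ ∧
      ¬ (u j₁ = 0 ∧ u j₂ = 0)

/-- Category IV: exactly one component of `v` is positive, `det R̂ < 0`, and both
complementary components of `u` are positive. -/
def CategoryIV (θ : Fin 3 → ℝ) (R : Matrix (Fin 3) (Fin 3) ℝ) : Prop :=
  ∃ u v : Fin 3 → ℝ, IsLCPSolution θ R u v ∧
    ∃ k j₁ j₂ : Fin 3, j₁ ≠ j₂ ∧ j₁ ≠ k ∧ j₂ ≠ k ∧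
      0 < v k ∧ v j₁ = 0 ∧ v j₂ = 0 ∧
      R j₁ j₁ * R j₂ j₂ - R j₁ j₂ * R j₂ j₁ < 0 ∧
      0 < u j₁ ∧ 0 < u j₂

lemma fin3_cover : ∀ (i j l x : Fin 3), i ≠ j → i ≠ l → j ≠ l → x = i ∨ x = j ∨ x = l := by
  decide

lemma fin3_sum (f : Fin 3 → ℝ) (i j l : Fin 3) (hij : i ≠ j) (hil : i ≠ l) (hjl : j ≠ l) :
    ∑ x, f x = f i + f j + f l := by
  fin_cases i <;> fin_cases j <;> fin_cases l <;> simp_all [Fin.sum_univ_three] <;> ring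

lemma mulVec3 (R : Matrix (Fin 3) (Fin 3) ℝ) (w : Fin 3 → ℝ) (m : Fin 3) (i j l : Fin 3)
    (hij : i ≠ j) (hil : i ≠ l) (hjl : j ≠ l) :
    R.mulVec w m = R m i * w i + R m j * w j + R m l * w l := by
  simp only [Matrix.mulVec, dotProduct]
  exact fin3_sum _ i j l hij hil hjl

lemma pair_S_bound {d : ℕ} (R : Matrix (Fin d) (Fin d) ℝ) (hS : CompletelyS R)
    (hdiag : ∀ i, R i i = 1) (i k : Fin d) (hik : i ≠ k) (hc : R k i ≤ -1) :
    R i k * R k i < 1 := by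
  obtain ⟨w, hw0, hwsupp, hwpos⟩ := hS {i, k} ⟨i, by simp⟩
  have hmv : ∀ m, R.mulVec w m = R m i * w i + R m k * w k := by
    intro m
    simp only [Matrix.mulVec, dotProduct]
    rw [← Finset.sum_subset (Finset.subset_univ ({i, k} : Finset (Fin d)))
      (fun x _ hx => by rw [hwsupp x hx, mul_zero])]
    rw [Finset.sum_insert (by simp [hik]), Finset.sum_singleton]
  have hA : 0 < w i + R i k * w k := by
    have := hwpos i (by simp); rw [hmv i, hdiag i] at this; linarith
  have hB : 0 < R k i * w i + w k := by
    have := hwpos k (by simp); rw [hmv k, hdiag k] at this; linarith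
  by_contra h; push_neg at h
  have hp0 : R i k < 0 := by
    by_contra h2; push_neg at h2
    nlinarith [mul_nonneg h2 (show 0 ≤ -R k i by linarith)]
  have hwi : 0 < w i := by nlinarith [mul_nonneg (neg_nonneg.mpr hp0.le) (hw0 k)]
  nlinarith [mul_lt_mul_of_pos_left (show (-R k i) * w i < w k by linarith)
      (show (0:ℝ) < -R i k by linarith),
    mul_le_mul_of_nonneg_right h hwi.le]

lemma catI_aux (R : Matrix (Fin 3) (Fin 3) ℝ) (θ : Fin 3 → ℝ)
    (k j₁ j₂ : Fin 3) (h12 : j₁ ≠ j₂) (h1k : j₁ ≠ k) (h2k : j₂ ≠ k)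
    (hdiag : ∀ i, R i i = 1)
    (hθ1 : θ j₁ = -1) (hθ2 : θ j₂ = -1)
    (hb : 1 < R j₂ j₁) (hk : 0 < θ k + R k j₁) : CategoryI θ R := by
  set u' : Fin 3 → ℝ := fun x => if x = j₁ then 1 else 0 with hu'
  have hmv : ∀ m, R.mulVec u' m = R m j₁ := by
    intro m
    rw [mulVec3 R u' m j₁ j₂ k h12 h1k h2k]
    simp [hu', h12.symm, h1k.symm, h2k.symm]
  set v' : Fin 3 → ℝ := θ + R.mulVec u' with hv'
  have hv1 : v' j₁ = 0 := by simp [hv', hmv, hθ1, hdiag]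
  have hv2 : v' j₂ = 0 + (R j₂ j₁ - 1) := by simp [hv', hmv, hθ2]; ring
  have hv2' : 0 < v' j₂ := by rw [hv2]; linarith
  have hvk : 0 < v' k := by simp [hv', hmv]; linarith
  have hcov := fun x => fin3_cover j₁ j₂ k x h12 h1k h2k
  refine ⟨u', v', ⟨?_, ?_, rfl, ?_⟩, j₁, by simp [hu'], hv1, ?_⟩
  · intro i; simp [hu']; split <;> norm_num
  · intro i; rcases hcov i with rfl | rfl | rfl
    · exact hv1.ge
    · exact hv2'.le
    · exact hvk.le
  · show ∑ x, u' x * v' x = 0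
    rw [fin3_sum _ j₁ j₂ k h12 h1k h2k]
    simp [hu', hv1, h12.symm, h1k.symm]
  · intro j hj; rcases hcov j with rfl | rfl | rfl
    · exact absurd rfl hj
    · exact hv2'
    · exact hvk

lemma catII_aux (R : Matrix (Fin 3) (Fin 3) ℝ) (θ : Fin 3 → ℝ)
    (k j₁ j₂ : Fin 3) (h12 : j₁ ≠ j₂) (h1k : j₁ ≠ k) (h2k : j₂ ≠ k)
    (hdiag : ∀ i, R i i = 1)
    (hθ1 : θ j₁ = -1) (hθ2 : θ j₂ = -1) (hθk : θ k = 1)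
    (hD : 0 < 1 - R j₁ k * R k j₁)
    (hp : -1 < R j₁ k) (hc : R k j₁ ≤ -1)
    (hN : 0 < R j₂ j₁ * (1 + R j₁ k) + R j₂ k * (-1 - R k j₁) - (1 - R j₁ k * R k j₁)) :
    CategoryII θ R := by
  have hDne : (1 - R j₁ k * R k j₁) ≠ 0 := ne_of_gt hD
  set u' : Fin 3 → ℝ := fun x =>
    if x = j₁ then (1 + R j₁ k) / (1 - R j₁ k * R k j₁)
    else if x = k then (-1 - R k j₁) / (1 - R j₁ k * R k j₁) else 0 with hu'
  have hu1 : u' j₁ = (1 + R j₁ k) / (1 - R j₁ k * R k j₁) := by simp [hu']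
  have huk : u' k = (-1 - R k j₁) / (1 - R j₁ k * R k j₁) := by simp [hu', h1k.symm]
  have hu2 : u' j₂ = 0 := by simp [hu', h12.symm, h2k]
  have hmv : ∀ m, R.mulVec u' m =
      R m j₁ * ((1 + R j₁ k) / (1 - R j₁ k * R k j₁))
      + R m k * ((-1 - R k j₁) / (1 - R j₁ k * R k j₁)) := by
    intro m
    rw [mulVec3 R u' m j₁ k j₂ h1k h12 (Ne.symm h2k), hu1, huk, hu2]
    ring
  set v' : Fin 3 → ℝ := θ + R.mulVec u' with hv'
  have hv1 : v' j₁ = 0 := by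
    simp only [hv', Pi.add_apply, hmv, hθ1, hdiag]
    field_simp
    ring
  have hvk : v' k = 0 := by
    simp only [hv', Pi.add_apply, hmv, hθk, hdiag]
    rw [div_eq_mul_inv, div_eq_mul_inv]
    have hDI := mul_inv_cancel₀ hDne
    linear_combination -hDI
  have hv2 : 0 < v' j₂ := by
    have : v' j₂ = (R j₂ j₁ * (1 + R j₁ k) + R j₂ k * (-1 - R k j₁)
        - (1 - R j₁ k * R k j₁)) / (1 - R j₁ k * R k j₁) := by
      simp only [hv', Pi.add_apply, hmv, hθ2]
      field_simp
      ring
    rw [this]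
    exact div_pos hN hD
  have hu1pos : 0 < u' j₁ := by
    rw [hu1]; exact div_pos (by linarith) hD
  have hukpos : 0 ≤ u' k := by
    rw [huk]; exact div_nonneg (by linarith) hD.le
  have hcov := fun x => fin3_cover j₁ k j₂ x h1k h12 (Ne.symm h2k)
  refine ⟨u', v', ⟨?_, ?_, rfl, ?_⟩, j₂, j₁, k, h1k, h12, Ne.symm h2k, hv2, hv1, hvk, ?_, ?_⟩
  · intro i; rcases hcov i with rfl | rfl | rfl
    · exact hu1pos.le
    · exact hukpos
    · exact hu2.ge
  · intro i; rcases hcov i with rfl | rfl | rfl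
    · exact hv1.ge
    · exact hvk.ge
    · exact hv2.le
  · show ∑ x, u' x * v' x = 0
    rw [fin3_sum _ j₁ k j₂ h1k h12 (Ne.symm h2k), hv1, hvk, hu2]
    ring
  · rw [hdiag, hdiag]; linarith
  · intro h; exact absurd h.1 (ne_of_gt hu1pos)

theorem stmt6 (R : Matrix (Fin 3) (Fin 3) ℝ) (hS : CompletelyS R)
    (hdiag : ∀ i, R i i = 1)
    (θ : Fin 3 → ℝ) (hθ : ∀ i, θ i ∈ ({-1, 0, 1} : Set ℝ))
    (hIV : CategoryIV θ R) :
    CategoryI θ R ∨ CategoryII θ R := by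
  obtain ⟨u, v, ⟨hu0, hv0, hveq, hdot⟩, k, j₁, j₂, h12, h1k, h2k, hvk, hv1, hv2, hdet, hu1, hu2⟩ := hIV
  have hk1 : k ≠ j₁ := h1k.symm
  have hk2 : k ≠ j₂ := h2k.symm
  -- u k = 0
  have huk : u k = 0 := by
    have hsum : u ⬝ᵥ v = u k * v k + u j₁ * v j₁ + u j₂ * v j₂ :=
      fin3_sum _ k j₁ j₂ hk1 hk2 h12
    rw [hsum, hv1, hv2] at hdot
    have : u k * v k = 0 := by linarith
    rcases mul_eq_zero.mp this with h | h
    · exact h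
    · exact absurd h (ne_of_gt hvk)
  -- equations
  have e1 : θ j₁ + u j₁ + R j₁ j₂ * u j₂ = 0 := by
    have := congrFun hveq j₁
    rw [Pi.add_apply, mulVec3 R u j₁ k j₁ j₂ hk1 hk2 h12, huk, hdiag j₁, hv1] at this
    linarith
  have e2 : θ j₂ + R j₂ j₁ * u j₁ + u j₂ = 0 := by
    have := congrFun hveq j₂
    rw [Pi.add_apply, mulVec3 R u j₂ k j₁ j₂ hk1 hk2 h12, huk, hdiag j₂, hv2] at this
    linarith
  have ek : v k = θ k + R k j₁ * u j₁ + R k j₂ * u j₂ := by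
    have := congrFun hveq k
    rw [Pi.add_apply, mulVec3 R u k k j₁ j₂ hk1 hk2 h12, huk] at this
    linarith
  -- ab > 1
  have hab : 1 < R j₁ j₂ * R j₂ j₁ := by
    rw [hdiag j₁, hdiag j₂] at hdet; linarith
  -- a, b > 0
  obtain ⟨w, hw0, hwsupp, hwpos⟩ := hS {j₁, j₂} ⟨j₁, by simp⟩
  have hwk : w k = 0 := hwsupp k (by simp [hk1, hk2])
  have hwp1 : 0 < w j₁ + R j₁ j₂ * w j₂ := by
    have := hwpos j₁ (by simp)
    rw [mulVec3 R w j₁ k j₁ j₂ hk1 hk2 h12, hwk, hdiag j₁] at this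
    linarith
  have hwp2 : 0 < R j₂ j₁ * w j₁ + w j₂ := by
    have := hwpos j₂ (by simp)
    rw [mulVec3 R w j₂ k j₁ j₂ hk1 hk2 h12, hwk, hdiag j₂] at this
    linarith
  have hb0 : 0 < R j₂ j₁ := by
    by_contra h; push_neg at h
    have ha0 : R j₁ j₂ < 0 := by
      by_contra h2; push_neg at h2
      nlinarith [mul_nonneg h2 (neg_nonneg.mpr h)]
    nlinarith [mul_pos (neg_pos.mpr ha0) hwp2,
      mul_nonneg (hw0 j₁) (show (0:ℝ) ≤ R j₁ j₂ * R j₂ j₁ - 1 by linarith)]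
  have ha0 : 0 < R j₁ j₂ := by
    by_contra h; push_neg at h
    nlinarith [mul_nonneg (neg_nonneg.mpr h) hb0.le]
  -- θ j₁ = θ j₂ = -1
  have ht1 : θ j₁ = -1 := by
    have hneg : θ j₁ < 0 := by nlinarith [mul_pos ha0 hu2]
    have h := hθ j₁
    simp only [Set.mem_insert_iff, Set.mem_singleton_iff] at h
    rcases h with h | h | h <;> linarith
  have ht2 : θ j₂ = -1 := by
    have hneg : θ j₂ < 0 := by nlinarith [mul_pos hb0 hu1]
    have h := hθ j₂
    simp only [Set.mem_insert_iff, Set.mem_singleton_iff] at h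
    rcases h with h | h | h <;> linarith
  rw [ht1] at e1
  rw [ht2] at e2
  -- a, b > 1
  have hb1 : 1 < R j₂ j₁ := by
    have key : R j₂ j₁ - 1 = (R j₁ j₂ * R j₂ j₁ - 1) * u j₂ := by
      linear_combination e2 - R j₂ j₁ * e1
    nlinarith [mul_pos (show (0:ℝ) < R j₁ j₂ * R j₂ j₁ - 1 by linarith) hu2]
  have ha1 : 1 < R j₁ j₂ := by
    have key : R j₁ j₂ - 1 = (R j₁ j₂ * R j₂ j₁ - 1) * u j₁ := by
      linear_combination e1 - R j₁ j₂ * e2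
    nlinarith [mul_pos (show (0:ℝ) < R j₁ j₂ * R j₂ j₁ - 1 by linarith) hu1]
  -- Category I cases
  by_cases hck : 0 < θ k + R k j₁
  · exact Or.inl (catI_aux R θ k j₁ j₂ h12 h1k h2k hdiag ht1 ht2 hb1 hck)
  by_cases hdk : 0 < θ k + R k j₂
  · exact Or.inl (catI_aux R θ k j₂ j₁ h12.symm h2k h1k hdiag ht2 ht1 ha1 hdk)
  push_neg at hck hdk
  -- θ k = 1
  have hsum1 : u j₁ + u j₂ < 1 := by
    nlinarith [mul_pos (show (0:ℝ) < R j₁ j₂ - 1 by linarith) hu2]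
  have htk : θ k = 1 := by
    have h := hθ k
    simp only [Set.mem_insert_iff, Set.mem_singleton_iff] at h
    rcases h with h | h | h
    · rw [h] at hck hdk ek
      linarith [mul_le_mul_of_nonneg_right (show R k j₁ ≤ 1 by linarith) (hu0 j₁),
        mul_le_mul_of_nonneg_right (show R k j₂ ≤ 1 by linarith) (hu0 j₂)]
    · rw [h] at hck hdk ek
      linarith [mul_le_mul_of_nonneg_right (show R k j₁ ≤ 0 by linarith) (hu0 j₁),
        mul_le_mul_of_nonneg_right (show R k j₂ ≤ 0 by linarith) (hu0 j₂)]
    · exact h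
  rw [htk] at hck hdk
  have hc1 : R k j₁ ≤ -1 := by linarith
  have hd1 : R k j₂ ≤ -1 := by linarith
  -- S bounds on pairs {j₁,k}, {j₂,k}
  have hpc : R j₁ k * R k j₁ < 1 := pair_S_bound R hS hdiag j₁ k h1k hc1
  have hqd : R j₂ k * R k j₂ < 1 := pair_S_bound R hS hdiag j₂ k h2k hd1
  have hp1 : -1 < R j₁ k := by
    by_contra h; push_neg at h
    linarith [mul_nonneg (show (0:ℝ) ≤ -1 - R j₁ k by linarith)
      (show (0:ℝ) ≤ -1 - R k j₁ by linarith)]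
  have hq1 : -1 < R j₂ k := by
    by_contra h; push_neg at h
    linarith [mul_nonneg (show (0:ℝ) ≤ -1 - R j₂ k by linarith)
      (show (0:ℝ) ≤ -1 - R k j₂ by linarith)]
  -- dichotomy
  by_cases hN1 : 0 < R j₂ j₁ * (1 + R j₁ k) + R j₂ k * (-1 - R k j₁) - (1 - R j₁ k * R k j₁)
  · exact Or.inr (catII_aux R θ k j₁ j₂ h12 h1k h2k hdiag ht1 ht2 htk
      (by linarith) hp1 hc1 hN1)
  · push_neg at hN1
    have hba : 1 + R j₂ k < 1 + R j₁ k := by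
      by_contra h; push_neg at h
      linarith [mul_nonneg (show (0:ℝ) ≤ -1 - R k j₁ by linarith)
          (show (0:ℝ) ≤ (1 + R j₂ k) - (1 + R j₁ k) by linarith),
        mul_pos (show (0:ℝ) < R j₂ j₁ - 1 by linarith)
          (show (0:ℝ) < 1 + R j₁ k by linarith)]
    have hN2 : 0 < R j₁ j₂ * (1 + R j₂ k) + R j₁ k * (-1 - R k j₂) - (1 - R j₂ k * R k j₂) := by
      linarith [mul_pos (show (0:ℝ) < R j₁ j₂ - 1 by linarith)
          (show (0:ℝ) < 1 + R j₂ k by linarith),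
        mul_nonneg (show (0:ℝ) ≤ -1 - R k j₂ by linarith)
          (show (0:ℝ) ≤ (1 + R j₁ k) - (1 + R j₂ k) by linarith)]
    exact Or.inr (catII_aux R θ k j₂ j₁ h12.symm h2k h1k hdiag ht2 ht1 htk
      (by linarith) hq1 hd1 hN2)
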